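/- arXiv:1509.00220 — 2 statements merged into one kernel-verified Lean document; each statement's English description precedes it below -/
import Mathlib

section
/- Let n ≥ 3 and let r = ⌊n/2⌋. Then the curling number of the r-th power of the path graph P_n equals 2. -/
open Finset

/-- The degree of a vertex `v` in a simple graph `G`: the number of its neighbours. -/
noncomputable def gdeg {V : Type*} (G : SimpleGraph V) (v : V) : ℕ :=
  (G.neighborSet v).ncard

/-- The curling number of a finite simple graph: the maximum number of vertices
of `G` sharing a common degree. -/
noncomputable def curlingNumber {V : Type*} [Fintype V] (G : SimpleGraph V) : ℕ :=
  Finset.univ.sup fun v => (Finset.univ.filter fun u => gdeg G u = gdeg G v).card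

/-- The `r`-th power of a simple graph `G`: same vertex set, two distinct vertices
adjacent iff their distance in `G` is (finite and) at most `r`. -/
def SimpleGraph.power {V : Type*} (G : SimpleGraph V) (r : ℕ) : SimpleGraph V where
  Adj u v := u ≠ v ∧ G.Reachable u v ∧ G.dist u v ≤ r
  symm := by
    constructor
    rintro u v ⟨h1, h2, h3⟩
    exact ⟨h1.symm, h2.symm, by rwa [SimpleGraph.dist_comm]⟩
  loopless := by
    constructor
    rintro v ⟨h1, -, -⟩
    exact h1 rfl

open SimpleGraph in
lemma walk_exists (n : ℕ) : ∀ (k : ℕ) (u v : Fin n), v.val = u.val + k →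
    ∃ p : (pathGraph n).Walk u v, p.length = k := by
  intro k
  induction k with
  | zero =>
    intro u v h
    have : u = v := Fin.ext (by omega)
    subst this
    exact ⟨Walk.nil, rfl⟩
  | succ k ih =>
    intro u v h
    have hu1 : u.val + 1 < n := by have := v.isLt; omega
    obtain ⟨p, hp⟩ := ih ⟨u.val + 1, hu1⟩ v (by simp; omega)
    exact ⟨Walk.cons (pathGraph_adj.mpr (Or.inl rfl)) p, by simp [hp]⟩

open SimpleGraph in
lemma walk_dist_le {n : ℕ} {u v : Fin n} (p : (pathGraph n).Walk u v) :
    Nat.dist u.val v.val ≤ p.length := by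
  induction p with
  | nil => simp [Nat.dist]
  | @cons a b c h p ih =>
    rw [pathGraph_adj] at h
    have : Nat.dist a.val c.val ≤ Nat.dist a.val b.val + Nat.dist b.val c.val :=
      Nat.dist.triangle_inequality _ _ _
    simp only [Nat.dist, Walk.length_cons] at *
    omega

open SimpleGraph in
lemma pathGraph_reachable {n : ℕ} (u v : Fin n) : (pathGraph n).Reachable u v := by
  rcases le_total u.val v.val with h | h
  · obtain ⟨p, -⟩ := walk_exists n (v.val - u.val) u v (by omega)
    exact ⟨p⟩
  · obtain ⟨p, -⟩ := walk_exists n (u.val - v.val) v u (by omega)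
    exact ⟨p.reverse⟩

open SimpleGraph in
lemma pathGraph_dist {n : ℕ} (u v : Fin n) :
    (pathGraph n).dist u v = Nat.dist u.val v.val := by
  apply le_antisymm
  · rcases le_total u.val v.val with h | h
    · obtain ⟨p, hp⟩ := walk_exists n (v.val - u.val) u v (by omega)
      calc (pathGraph n).dist u v ≤ p.length := dist_le p
        _ = Nat.dist u.val v.val := by simp [hp, Nat.dist]; omega
    · obtain ⟨p, hp⟩ := walk_exists n (u.val - v.val) v u (by omega)
      calc (pathGraph n).dist u v ≤ p.reverse.length := dist_le p.reverse
        _ = Nat.dist u.val v.val := by simp [hp, Nat.dist]; omega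
  · obtain ⟨p, hp⟩ := (pathGraph_reachable u v).exists_walk_length_eq_dist
    rw [← hp]
    exact walk_dist_le p

open SimpleGraph in
lemma power_adj {n r : ℕ} (u v : Fin n) :
    ((pathGraph n).power r).Adj u v ↔ u ≠ v ∧ Nat.dist u.val v.val ≤ r := by
  constructor
  · rintro ⟨h1, -, h3⟩
    exact ⟨h1, by rwa [pathGraph_dist] at h3⟩
  · rintro ⟨h1, h2⟩
    exact ⟨h1, pathGraph_reachable u v, by rwa [pathGraph_dist]⟩

open SimpleGraph in
lemma gdeg_power (n r : ℕ) (hn : 3 ≤ n) (hr : r = n / 2) (i : Fin n) :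
    gdeg ((pathGraph n).power r) i = min i.val (n - 1 - i.val) + r := by
  classical
  have hfin : (((pathGraph n).power r).neighborSet i).Finite := Set.toFinite _
  rw [gdeg, Set.ncard_eq_toFinset_card _ hfin]
  have hi := i.isLt
  have hcard : hfin.toFinset.card =
      ((Finset.Icc (i.val - r) (min (i.val + r) (n - 1))).erase i.val).card := by
    apply Finset.card_bij (fun a _ => a.val)
    · intro a ha
      rw [Set.Finite.mem_toFinset, mem_neighborSet, power_adj] at ha
      obtain ⟨h1, h2⟩ := ha
      have := a.isLt
      have hne : i.val ≠ a.val := fun h => h1 (Fin.ext h)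
      simp only [Nat.dist] at h2
      simp only [Finset.mem_erase, Finset.mem_Icc]
      omega
    · intro a _ b _ h
      exact Fin.ext h
    · intro b hb
      simp only [Finset.mem_erase, Finset.mem_Icc] at hb
      have hbn : b < n := by omega
      refine ⟨⟨b, hbn⟩, ?_, rfl⟩
      rw [Set.Finite.mem_toFinset, mem_neighborSet, power_adj]
      constructor
      · intro h
        exact hb.1 (congrArg Fin.val h).symm
      · simp only [Nat.dist]
        omega
  rw [hcard, Finset.card_erase_of_mem (by simp only [Finset.mem_Icc]; omega), Nat.card_Icc]
  omega

/-- For `n ≥ 3` and `r = ⌊n/2⌋`, the curling number of the `r`-th power of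
the path graph `P_n` is `2`. -/
theorem curlingNumber_pathGraph_power_half (n r : ℕ) (hn : 3 ≤ n) (hr : r = n / 2) :
    curlingNumber ((SimpleGraph.pathGraph n).power r) = 2 := by
  classical
  set G := (SimpleGraph.pathGraph n).power r with hG
  have hdeg : ∀ i : Fin n, gdeg G i = min i.val (n - 1 - i.val) + r :=
    gdeg_power n r hn hr
  apply le_antisymm
  · apply Finset.sup_le
    intro v _
    set w : Fin n := ⟨n - 1 - v.val, by omega⟩ with hw
    have hsub : (Finset.univ.filter fun u => gdeg G u = gdeg G v) ⊆ {v, w} := by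
      intro u hu
      rw [Finset.mem_filter] at hu
      have h := hu.2
      rw [hdeg u, hdeg v] at h
      have hu' := u.isLt
      have hv' := v.isLt
      have : u.val = v.val ∨ u.val = n - 1 - v.val := by omega
      rcases this with h' | h'
      · simp [Fin.ext h']
      · simp [show u = w from Fin.ext h']
    calc (Finset.univ.filter fun u => gdeg G u = gdeg G v).card
        ≤ ({v, w} : Finset (Fin n)).card := Finset.card_le_card hsub
      _ ≤ 2 := (Finset.card_insert_le v {w}).trans (by simp)
  · have h0 : (0 : ℕ) < n := by omega
    set v0 : Fin n := ⟨0, by omega⟩ with hv0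
    set v1 : Fin n := ⟨n - 1, by omega⟩ with hv1
    have hne : v0 ≠ v1 := by
      intro h
      have := congrArg Fin.val h
      simp [hv0, hv1] at this
      omega
    have hsub : ({v0, v1} : Finset (Fin n)) ⊆
        (Finset.univ.filter fun u => gdeg G u = gdeg G v0) := by
      intro u hu
      rw [Finset.mem_filter]
      refine ⟨Finset.mem_univ _, ?_⟩
      rcases Finset.mem_insert.mp hu with h | h
      · rw [h]
      · rw [Finset.mem_singleton.mp h, hdeg v1, hdeg v0]
        simp only [hv0, hv1]
        omega
    have h2 : 2 ≤ (Finset.univ.filter fun u => gdeg G u = gdeg G v0).card := by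
      calc 2 = ({v0, v1} : Finset (Fin n)).card := by
            rw [Finset.card_insert_of_notMem (by simpa using hne), Finset.card_singleton]
        _ ≤ _ := Finset.card_le_card hsub
    unfold curlingNumber
    refine le_trans h2 ?_
    exact Finset.le_sup (f := fun v => (Finset.univ.filter fun u => gdeg G u = gdeg G v).card)
      (Finset.mem_univ v0)
end

section
/- Let n ≥ 3 and let r be an integer with ⌊n/2⌋ < r ≤ n − 1. Then the curling number of the r-th power of the path graph P_n equals 2(r + 1) − n. -/
open Finset

-- auxiliary lemmas

lemma pg_walk (n : ℕ) : ∀ (k : ℕ) (i j : Fin n), j.val = i.val + k →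
    ∃ w : (SimpleGraph.pathGraph n).Walk i j, w.length = k := by
  intro k
  induction k with
  | zero =>
    intro i j h
    have : i = j := Fin.ext (by omega)
    subst this
    exact ⟨SimpleGraph.Walk.nil, rfl⟩
  | succ k ih =>
    intro i j h
    have hi1 : i.val + 1 < n := by have := j.isLt; omega
    have hadj : (SimpleGraph.pathGraph n).Adj i ⟨i.val + 1, hi1⟩ := by
      rw [SimpleGraph.pathGraph_adj]; left; rfl
    obtain ⟨w, hw⟩ := ih ⟨i.val + 1, hi1⟩ j (by simp; omega)
    exact ⟨SimpleGraph.Walk.cons hadj w, by simp [hw]⟩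

lemma pg_walk_length_ge {n : ℕ} {i j : Fin n} (w : (SimpleGraph.pathGraph n).Walk i j) :
    (i.val - j.val) + (j.val - i.val) ≤ w.length := by
  induction w with
  | nil => simp
  | cons h w ih =>
    rw [SimpleGraph.pathGraph_adj] at h
    rw [SimpleGraph.Walk.length_cons]
    omega

lemma pg_reachable {n : ℕ} (i j : Fin n) : (SimpleGraph.pathGraph n).Reachable i j := by
  rcases le_total i.val j.val with h | h
  · obtain ⟨w, -⟩ := pg_walk n (j.val - i.val) i j (by omega)
    exact w.reachable
  · obtain ⟨w, -⟩ := pg_walk n (i.val - j.val) j i (by omega)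
    exact w.reachable.symm

lemma pg_dist {n : ℕ} (i j : Fin n) :
    (SimpleGraph.pathGraph n).dist i j = (i.val - j.val) + (j.val - i.val) := by
  refine le_antisymm ?_ ?_
  · rcases le_total i.val j.val with h | h
    · obtain ⟨w, hw⟩ := pg_walk n (j.val - i.val) i j (by omega)
      exact (SimpleGraph.dist_le w).trans (by omega)
    · obtain ⟨w, hw⟩ := pg_walk n (i.val - j.val) j i (by omega)
      rw [SimpleGraph.dist_comm]
      exact (SimpleGraph.dist_le w).trans (by omega)
  · obtain ⟨w, hw⟩ := (pg_reachable i j).exists_walk_length_eq_dist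
    rw [← hw]
    exact pg_walk_length_ge w

lemma gdeg_eq_card {V : Type*} [Fintype V] (G : SimpleGraph V) [DecidableRel G.Adj] (v : V) :
    gdeg G v = (Finset.univ.filter fun u => G.Adj v u).card := by
  rw [gdeg, Set.ncard_eq_toFinset_card']
  congr 1; ext; simp

def fdeg (n r i : ℕ) : ℕ := min (i + r) (n - 1) - (i - r)

lemma card_filter_fin {n : ℕ} (p : ℕ → Prop) [DecidablePred p] :
    ((Finset.univ : Finset (Fin n)).filter fun u => p u.val).card
      = ((Finset.range n).filter p).card := by
  rw [Finset.card_filter, Finset.card_filter, Fin.sum_univ_eq_sum_range (fun i => if p i then 1 else 0)]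

lemma gdeg_power_s2 (n r : ℕ) (v : Fin n) :
    gdeg ((SimpleGraph.pathGraph n).power r) v = fdeg n r v.val := by
  letI : DecidableRel ((SimpleGraph.pathGraph n).power r).Adj := Classical.decRel _
  rw [gdeg_eq_card]
  have : ∀ u : Fin n, ((SimpleGraph.pathGraph n).power r).Adj v u ↔
      (u.val ≠ v.val ∧ (v.val - u.val) + (u.val - v.val) ≤ r) := by
    intro u
    constructor
    · rintro ⟨h1, -, h3⟩
      rw [pg_dist] at h3
      exact ⟨fun h => h1 (Fin.ext h).symm, h3⟩
    · rintro ⟨h1, h2⟩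
      exact ⟨fun h => h1 (by rw [h]), pg_reachable v u, by rw [pg_dist]; omega⟩
  rw [Finset.filter_congr (fun u _ => by rw [this u])]
  rw [card_filter_fin (fun j => j ≠ v.val ∧ (v.val - j) + (j - v.val) ≤ r)]
  have hv := v.isLt
  have hset : (Finset.range n).filter (fun j => j ≠ v.val ∧ (v.val - j) + (j - v.val) ≤ r)
      = (Finset.Icc (v.val - r) (min (v.val + r) (n - 1))).erase v.val := by
    ext a
    simp only [Finset.mem_filter, Finset.mem_range, Finset.mem_erase, Finset.mem_Icc]
    omega
  rw [hset, Finset.card_erase_of_mem (by simp [Finset.mem_Icc]; omega), Nat.card_Icc, fdeg]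
  omega

lemma class_card_le (n r t : ℕ) (hn : 3 ≤ n) (hr1 : n / 2 < r) (hr2 : r ≤ n - 1)
    (ht : t < n) :
    ((Finset.range n).filter fun j => fdeg n r j = fdeg n r t).card ≤ 2 * (r + 1) - n := by
  by_cases hfv : fdeg n r t = n - 1
  · have hset : (Finset.range n).filter (fun j => fdeg n r j = fdeg n r t)
        = Finset.Icc (n - 1 - r) r := by
      ext a
      simp only [Finset.mem_filter]
      simp only [Finset.mem_filter, Finset.mem_range, Finset.mem_Icc, fdeg] at *
      omega
    rw [hset, Nat.card_Icc]
    omega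
  · have hsub : (Finset.range n).filter (fun j => fdeg n r j = fdeg n r t)
        ⊆ {t, n - 1 - t} := by
      intro a ha
      simp only [Finset.mem_filter] at ha
      simp only [Finset.mem_filter, Finset.mem_range, fdeg] at ha
      simp only [Finset.mem_insert, Finset.mem_singleton]
      simp only [fdeg] at hfv
      omega
    calc _ ≤ ({t, n - 1 - t} : Finset ℕ).card := Finset.card_le_card hsub
      _ ≤ 2 := Finset.card_insert_le _ _ |>.trans (by simp)
      _ ≤ 2 * (r + 1) - n := by omega

lemma class_card_r (n r : ℕ) (hn : 3 ≤ n) (hr1 : n / 2 < r) (hr2 : r ≤ n - 1) :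
    ((Finset.range n).filter fun j => fdeg n r j = fdeg n r r).card = 2 * (r + 1) - n := by
  have hset : (Finset.range n).filter (fun j => fdeg n r j = fdeg n r r)
      = Finset.Icc (n - 1 - r) r := by
    ext a
    simp only [Finset.mem_filter]
    simp only [Finset.mem_filter, Finset.mem_range, Finset.mem_Icc, fdeg]
    omega
  rw [hset, Nat.card_Icc]
  omega

/-- For `n ≥ 3` and `⌊n/2⌋ < r ≤ n - 1`, the curling number of the `r`-th
power of the path graph `P_n` is `2(r + 1) - n`. -/
theorem curlingNumber_pathGraph_power_of_gt (n r : ℕ) (hn : 3 ≤ n)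
    (hr1 : n / 2 < r) (hr2 : r ≤ n - 1) :
    curlingNumber ((SimpleGraph.pathGraph n).power r) = 2 * (r + 1) - n := by
  have key : ∀ v : Fin n,
      ((Finset.univ : Finset (Fin n)).filter fun u =>
          gdeg ((SimpleGraph.pathGraph n).power r) u
            = gdeg ((SimpleGraph.pathGraph n).power r) v).card
        = ((Finset.range n).filter fun j => fdeg n r j = fdeg n r v.val).card := by
    intro v
    have h1 : ((Finset.univ : Finset (Fin n)).filter fun u =>
          gdeg ((SimpleGraph.pathGraph n).power r) u
            = gdeg ((SimpleGraph.pathGraph n).power r) v)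
        = ((Finset.univ : Finset (Fin n)).filter fun u => fdeg n r u.val = fdeg n r v.val) := by
      ext u
      simp only [Finset.mem_filter, Finset.mem_univ, true_and, gdeg_power_s2]
    rw [h1]
    exact card_filter_fin (fun j => fdeg n r j = fdeg n r v.val)
  rw [curlingNumber]
  apply le_antisymm
  · apply Finset.sup_le
    intro v _
    rw [key v]
    exact class_card_le n r v.val hn hr1 hr2 v.isLt
  · have hr : r < n := by omega
    refine le_trans ?_ (Finset.le_sup (Finset.mem_univ (⟨r, hr⟩ : Fin n)))
    rw [key ⟨r, hr⟩]
    exact (class_card_r n r hn hr1 hr2).ge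
end
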